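/- For the element ω ∈ Sⁿ(g*) with ω(ξ_{i₁}⋯ξ_{iₙ}) ≠ 0, consider the trivial bundle ℝ^{2n} × G → ℝ^{2n} with the connection Θ whose pullback along the canonical section is x¹dx² ξ_{i₁} + ⋯ + x^{2n−1}dx^{2n} ξ_{iₙ}. Then the Chern–Weil form ω(Ω^{∧n}) ∈ Ω^{2n}(ℝ^{2n}), evaluated at the origin on the coordinate vectors ∂₁,…,∂_{2n}, equals n!·ω(ξ_{i₁}⋯ξ_{iₙ}), which is nonzero. Consequently, the Weil homomorphism W(g) → Ω(EG) is injective. -/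

import Mathlib

open scoped BigOperators

/-!  Let `𝔤` be the Lie algebra of a Lie group `G`, `ξ : Fin n → 𝔤` the chosen
basis vectors `ξ_{i₁}, …, ξ_{iₙ}`, and `ω ∈ Sⁿ(𝔤*)` a symmetric `n`-multilinear
form.  On the trivial principal `G`-bundle `ℝ^{2n} × G → ℝ^{2n}` we take the
connection whose pullback along the canonical section is
`Θ = x¹dx² ξ_{i₁} + ⋯ + x^{2n-1}dx^{2n} ξ_{iₙ}` (coordinates indexed by
`Fin (2n)`, with `x^{2m-1} = x (2m)` and `x^{2m} = x (2m+1)` in 0-based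
indexing), with curvature `Ω = dΘ + ½[Θ ∧ Θ]`.  The Chern–Weil `2n`-form
`ω(Ω^{∧n})` is evaluated on tangent vectors by the alternating sum over
permutations (with the normalization `2⁻ⁿ`). -/

variable (𝔤 : Type) [LieRing 𝔤] [LieAlgebra ℝ 𝔤]

/-- first index of the `m`-th coordinate pair -/
def idx1 (n : ℕ) (m : Fin n) : Fin (2 * n) := ⟨2 * m.1, by omega⟩

/-- second index of the `m`-th coordinate pair -/
def idx2 (n : ℕ) (m : Fin n) : Fin (2 * n) := ⟨2 * m.1 + 1, by omega⟩

/-- the connection 1-form `Θ = Σ_m x^{2m-1} dx^{2m} ξ_m` at the point `x`,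
evaluated on the tangent vector `v`. -/
def conn (n : ℕ) (ξ : Fin n → 𝔤) (x v : Fin (2 * n) → ℝ) : 𝔤 :=
  ∑ m : Fin n, (x (idx1 n m) * v (idx2 n m)) • ξ m

/-- the curvature `Ω = dΘ + ½[Θ ∧ Θ]` at the point `x`, evaluated on the tangent
vectors `v, w` (note `½[Θ∧Θ](v,w) = [Θv, Θw]`). -/
def curv (n : ℕ) (ξ : Fin n → 𝔤) (x v w : Fin (2 * n) → ℝ) : 𝔤 :=
  (∑ m : Fin n, (v (idx1 n m) * w (idx2 n m) - w (idx1 n m) * v (idx2 n m)) • ξ m) +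
    ⁅conn 𝔤 n ξ x v, conn 𝔤 n ξ x w⁆

/-- the Chern–Weil form `ω(Ω^{∧n})` at the point `x`, evaluated on the tangent
vectors `v 0, …, v (2n-1)`. -/
noncomputable def chernWeilForm (n : ℕ) (ξ : Fin n → 𝔤)
    (ω : MultilinearMap ℝ (fun _ : Fin n => 𝔤) ℝ)
    (x : Fin (2 * n) → ℝ) (v : Fin (2 * n) → Fin (2 * n) → ℝ) : ℝ :=
  ((2 : ℝ) ^ n)⁻¹ *
    ∑ σ : Equiv.Perm (Fin (2 * n)),
      (Equiv.Perm.sign σ : ℤ) *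
        ω (fun m => curv 𝔤 n ξ x (v (σ (idx1 n m))) (v (σ (idx2 n m))))

/-- combined index: `pt n false = idx1 n`, `pt n true = idx2 n`. -/
def pt (n : ℕ) (c : Bool) (m : Fin n) : Fin (2 * n) :=
  if c then idx2 n m else idx1 n m

def pr (n : ℕ) (i : Fin (2 * n)) : Fin n := ⟨i.1 / 2, by omega⟩

def par {n : ℕ} (i : Fin (2 * n)) : Bool := decide (i.1 % 2 = 1)

lemma pt_val (n : ℕ) (c : Bool) (m : Fin n) :
    (pt n c m).1 = 2 * m.1 + (if c then 1 else 0) := by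
  cases c <;> simp [pt, idx1, idx2]

lemma pr_pt (n : ℕ) (c : Bool) (m : Fin n) : pr n (pt n c m) = m := by
  apply Fin.ext; simp only [pr, pt_val]; cases c <;> simp <;> omega

lemma par_pt (n : ℕ) (c : Bool) (m : Fin n) : par (pt n c m) = c := by
  simp only [par, pt_val]; cases c <;> simp <;> omega

lemma pt_par_pr (n : ℕ) (i : Fin (2 * n)) : pt n (par i) (pr n i) = i := by
  apply Fin.ext; simp only [pt_val, par, pr]
  rcases Nat.even_or_odd i.1 with h | h
  · obtain ⟨k, hk⟩ := h
    have : (k + k) % 2 = 0 := by omega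
    simp [hk, this]; omega
  · obtain ⟨k, hk⟩ := h
    have : (2 * k + 1) % 2 = 1 := by omega
    simp [hk, this]; omega

lemma pt_inj {n : ℕ} {c c' : Bool} {m m' : Fin n} (h : pt n c m = pt n c' m') :
    c = c' ∧ m = m' := by
  constructor
  · have := congrArg par h; rwa [par_pt, par_pt] at this
  · have := congrArg (pr n) h; rwa [pr_pt, pr_pt] at this

lemma idx1_eq_pt (n : ℕ) (m : Fin n) : idx1 n m = pt n false m := rfl
lemma idx2_eq_pt (n : ℕ) (m : Fin n) : idx2 n m = pt n true m := rfl

/-- the permutation of `Fin (2n)` sending the `m`-th coordinate pair to the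
`τ m`-th coordinate pair, reversing the order within the pair iff `b m`. -/
def FP (n : ℕ) (τ : Equiv.Perm (Fin n)) (b : Fin n → Bool) : Equiv.Perm (Fin (2 * n)) where
  toFun i := pt n (xor (par i) (b (pr n i))) (τ (pr n i))
  invFun i := pt n (xor (par i) (b (τ.symm (pr n i)))) (τ.symm (pr n i))
  left_inv i := by
    simp only [pr_pt, par_pt, Equiv.symm_apply_apply, Bool.xor_assoc, Bool.xor_self,
      Bool.xor_false, pt_par_pr]
  right_inv i := by
    simp only [pr_pt, par_pt, Equiv.apply_symm_apply, Bool.xor_assoc, Bool.xor_self,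
      Bool.xor_false, pt_par_pr]

lemma FP_pt (n : ℕ) (τ : Equiv.Perm (Fin n)) (b : Fin n → Bool) (c : Bool) (m : Fin n) :
    FP n τ b (pt n c m) = pt n (xor c (b m)) (τ m) := by
  simp [FP, Equiv.coe_fn_mk, pr_pt, par_pt]

lemma FP_injective (n : ℕ) :
    Function.Injective (fun p : Equiv.Perm (Fin n) × (Fin n → Bool) => FP n p.1 p.2) := by
  rintro ⟨τ, b⟩ ⟨τ', b'⟩ h
  simp only [Prod.mk.injEq]
  have key : ∀ m, τ m = τ' m ∧ b m = b' m := by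
    intro m
    have h' : FP n τ b = FP n τ' b' := h
    have := congrFun (congrArg (fun e : Equiv.Perm (Fin (2*n)) => (e : Fin (2*n) → Fin (2*n))) h')
      (pt n false m)
    simp only [FP_pt] at this
    obtain ⟨h1, h2⟩ := pt_inj this
    simp only [Bool.false_xor] at h1
    exact ⟨h2, h1.symm ▸ rfl⟩
  exact ⟨Equiv.ext fun m => (key m).1, funext fun m => (key m).2⟩

lemma swap_pt (n : ℕ) (c : Bool) (x y : Fin n) (c' : Bool) (m : Fin n) :
    Equiv.swap (pt n c x) (pt n c y) (pt n c' m) =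
      pt n c' (if c = c' then Equiv.swap x y m else m) := by
  by_cases hc : c = c'
  · subst hc; rw [if_pos rfl]
    rcases eq_or_ne m x with rfl | hx
    · rw [Equiv.swap_apply_left, Equiv.swap_apply_left]
    rcases eq_or_ne m y with rfl | hy
    · rw [Equiv.swap_apply_right, Equiv.swap_apply_right]
    · rw [Equiv.swap_apply_of_ne_of_ne (fun h => hx (pt_inj h).2) (fun h => hy (pt_inj h).2),
        Equiv.swap_apply_of_ne_of_ne hx hy]
  · rw [if_neg hc, Equiv.swap_apply_of_ne_of_ne] <;> exact fun h => hc ((pt_inj h).1.symm)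

lemma FP_one_false (n : ℕ) : FP n 1 (fun _ => false) = 1 := by
  apply Equiv.ext; intro i
  conv_lhs => rw [← pt_par_pr n i]
  rw [FP_pt]
  simp [pt_par_pr]

lemma FP_mul_false (n : ℕ) (τ τ' : Equiv.Perm (Fin n)) :
    FP n (τ * τ') (fun _ => false) =
      FP n τ (fun _ => false) * FP n τ' (fun _ => false) := by
  apply Equiv.ext; intro i
  conv_lhs => rw [← pt_par_pr n i]
  conv_rhs => rw [← pt_par_pr n i]
  rw [Equiv.Perm.mul_apply, FP_pt, FP_pt, FP_pt]
  simp

lemma FP_swap_false (n : ℕ) (x y : Fin n) :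
    FP n (Equiv.swap x y) (fun _ => false) =
      Equiv.swap (pt n false x) (pt n false y) * Equiv.swap (pt n true x) (pt n true y) := by
  apply Equiv.ext; intro i
  conv_lhs => rw [← pt_par_pr n i]
  conv_rhs => rw [← pt_par_pr n i]
  rw [Equiv.Perm.mul_apply, FP_pt, swap_pt, swap_pt]
  cases h : par i <;> simp

lemma sign_FP_false (n : ℕ) (τ : Equiv.Perm (Fin n)) :
    Equiv.Perm.sign (FP n τ (fun _ => false)) = 1 := by
  refine Equiv.Perm.swap_induction_on τ ?_ ?_
  · rw [FP_one_false]; simp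
  · intro f x y hxy ih
    rw [FP_mul_false, map_mul, ih, mul_one, FP_swap_false, map_mul,
      Equiv.Perm.sign_swap (fun h => hxy (pt_inj h).2),
      Equiv.Perm.sign_swap (fun h => hxy (pt_inj h).2)]
    simp

lemma FP_split (n : ℕ) (τ : Equiv.Perm (Fin n)) (b : Fin n → Bool) :
    FP n τ b = FP n τ (fun _ => false) * FP n 1 b := by
  apply Equiv.ext; intro i
  conv_lhs => rw [← pt_par_pr n i]
  conv_rhs => rw [← pt_par_pr n i]
  rw [Equiv.Perm.mul_apply, FP_pt, FP_pt, FP_pt]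
  simp

lemma FP_update (n : ℕ) (b : Fin n → Bool) (a : Fin n) (hb : b a = true) :
    FP n 1 b = FP n 1 (Function.update b a false) * Equiv.swap (pt n false a) (pt n true a) := by
  apply Equiv.ext; intro i
  conv_lhs => rw [← pt_par_pr n i]
  conv_rhs => rw [← pt_par_pr n i]
  rw [Equiv.Perm.mul_apply]
  rcases eq_or_ne (pr n i) a with he | hma
  · rw [he, FP_pt, hb]
    cases h : par i
    · rw [Equiv.swap_apply_left, FP_pt]
      simp [Function.update_self]
    · rw [Equiv.swap_apply_right, FP_pt]
      simp [Function.update_self]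
  · rw [FP_pt,
      Equiv.swap_apply_of_ne_of_ne (fun h => hma (pt_inj h).2) (fun h => hma (pt_inj h).2),
      FP_pt, Function.update_of_ne hma]

lemma sign_FP_one_aux (n : ℕ) (s : Finset (Fin n)) :
    ∀ b : Fin n → Bool, (∀ m, b m = true → m ∈ s) →
      Equiv.Perm.sign (FP n 1 b) = ∏ m ∈ s, (if b m then (-1 : ℤˣ) else 1) := by
  induction s using Finset.induction_on with
  | empty =>
    intro b hb
    have hb' : b = fun _ => false := funext fun m => by
      cases h : b m
      · rfl
      · exact absurd (hb m h) (Finset.notMem_empty m)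
    rw [hb', FP_one_false]
    simp
  | @insert a s' ha ih =>
    intro b hb
    rw [Finset.prod_insert ha]
    by_cases hba : b a = true
    · rw [FP_update n b a hba, map_mul,
        ih (Function.update b a false) (fun m hm => by
          rcases Finset.mem_insert.mp (hb m (by
            rcases eq_or_ne m a with rfl | hma
            · rw [Function.update_self] at hm; exact absurd hm (by simp)
            · rwa [Function.update_of_ne hma] at hm)) with h | h
          · exfalso
            subst h
            rw [Function.update_self] at hm
            exact absurd hm (by simp)
          · exact h),
        Equiv.Perm.sign_swap (fun h => by simpa using (pt_inj h).1)]
      rw [hba, if_pos rfl]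
      have : ∀ m ∈ s', (if Function.update b a false m then (-1 : ℤˣ) else 1) =
          (if b m then (-1 : ℤˣ) else 1) := fun m hm => by
        rw [Function.update_of_ne (fun h => ha (by rw [← h]; exact hm))]
      rw [Finset.prod_congr rfl this, mul_comm]
    · rw [ih b (fun m hm => by
        rcases Finset.mem_insert.mp (hb m hm) with h | h
        · subst h; exact absurd hm hba
        · exact h)]
      rw [if_neg hba, one_mul]

lemma sign_FP (n : ℕ) (τ : Equiv.Perm (Fin n)) (b : Fin n → Bool) :
    Equiv.Perm.sign (FP n τ b) = ∏ m : Fin n, (if b m then (-1 : ℤˣ) else 1) := by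
  rw [FP_split, map_mul, sign_FP_false, one_mul,
    sign_FP_one_aux n Finset.univ b (fun m _ => Finset.mem_univ m)]

lemma conn_zero (n : ℕ) (ξ : Fin n → 𝔤) (v : Fin (2 * n) → ℝ) :
    conn 𝔤 n ξ 0 v = 0 := by
  simp [conn]

lemma curv_zero (n : ℕ) (ξ : Fin n → 𝔤) (v w : Fin (2 * n) → ℝ) :
    curv 𝔤 n ξ 0 v w =
      ∑ m : Fin n, (v (idx1 n m) * w (idx2 n m) - w (idx1 n m) * v (idx2 n m)) • ξ m := by
  simp [curv, conn_zero]

lemma single_pt (n : ℕ) (c c' : Bool) (m m' : Fin n) :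
    (Pi.single (pt n c m) 1 : Fin (2*n) → ℝ) (pt n c' m') =
      if c = c' ∧ m = m' then 1 else 0 := by
  rw [Pi.single_apply]
  by_cases h : pt n c' m' = pt n c m
  · obtain ⟨h1, h2⟩ := pt_inj h
    rw [if_pos h, if_pos ⟨h1.symm, h2.symm⟩]
  · rw [if_neg h, if_neg]
    rintro ⟨rfl, rfl⟩
    exact h rfl

/-- curvature at the origin on a matched pair of basis vectors -/
lemma curv_single_pair (n : ℕ) (ξ : Fin n → 𝔤) (c : Bool) (k : Fin n) :
    curv 𝔤 n ξ 0 (Pi.single (pt n c k) 1) (Pi.single (pt n (!c) k) 1) =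
      (if c then (-1 : ℝ) else 1) • ξ k := by
  rw [curv_zero]
  rw [Finset.sum_eq_single k]
  · rw [idx1_eq_pt, idx2_eq_pt, single_pt, single_pt, single_pt, single_pt]
    cases c <;> simp
  · intro m _ hmk
    rw [idx1_eq_pt, idx2_eq_pt, single_pt, single_pt, single_pt, single_pt]
    rw [if_neg (fun h => hmk h.2.symm), if_neg (fun h => hmk h.2.symm),
      if_neg (fun h => hmk h.2.symm), if_neg (fun h => hmk h.2.symm)]
    simp
  · simp

/-- curvature at the origin on an unmatched pair of basis vectors -/
lemma curv_single_zero (n : ℕ) (ξ : Fin n → 𝔤) (a b : Fin (2 * n))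
    (h : ∀ k : Fin n, ¬(a = idx1 n k ∧ b = idx2 n k) ∧ ¬(a = idx2 n k ∧ b = idx1 n k)) :
    curv 𝔤 n ξ 0 (Pi.single a 1) (Pi.single b 1) = 0 := by
  rw [curv_zero]
  apply Finset.sum_eq_zero
  intro m _
  obtain ⟨h1, h2⟩ := h m
  have e1 : (Pi.single a 1 : Fin (2*n) → ℝ) (idx1 n m) * (Pi.single b 1 : Fin (2*n) → ℝ) (idx2 n m) = 0 := by
    rw [Pi.single_apply, Pi.single_apply]
    split_ifs with hx hy
    · exact absurd ⟨hx.symm, hy.symm⟩ h1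
    all_goals ring
  have e2 : (Pi.single b 1 : Fin (2*n) → ℝ) (idx1 n m) * (Pi.single a 1 : Fin (2*n) → ℝ) (idx2 n m) = 0 := by
    rw [Pi.single_apply, Pi.single_apply]
    split_ifs with hx hy
    · exact absurd ⟨hy.symm, hx.symm⟩ h2
    all_goals ring
  rw [e1, e2, sub_zero, zero_smul]

lemma sign_FP_real (n : ℕ) (τ : Equiv.Perm (Fin n)) (b : Fin n → Bool) :
    ((Equiv.Perm.sign (FP n τ b) : ℤ) : ℝ) = ∏ m : Fin n, (if b m then (-1 : ℝ) else 1) := by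
  have h1 : ((Equiv.Perm.sign (FP n τ b) : ℤˣ) : ℤ) =
      ∏ m : Fin n, (if b m then (-1 : ℤ) else 1) := by
    rw [sign_FP]
    rw [show ((↑(∏ m : Fin n, if b m = true then (-1:ℤˣ) else 1) : ℤ)) =
        (Units.coeHom ℤ) (∏ m : Fin n, if b m = true then (-1:ℤˣ) else 1) from rfl,
      map_prod]
    refine Finset.prod_congr rfl fun m _ => ?_
    cases b m <;> rfl
  rw [h1]
  push_cast
  refine Finset.prod_congr rfl fun m _ => ?_
  cases b m <;> norm_num

lemma key (n : ℕ) (ξ : Fin n → 𝔤)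
    (ω : MultilinearMap ℝ (fun _ : Fin n => 𝔤) ℝ)
    (hsym : ∀ (σ : Equiv.Perm (Fin n)) (c : Fin n → 𝔤), ω (c ∘ σ) = ω c) :
    chernWeilForm 𝔤 n ξ ω 0 (fun i => Pi.single i 1) = (n.factorial : ℝ) * ω ξ := by
  classical
  unfold chernWeilForm
  have himg : ∀ σ : Equiv.Perm (Fin (2 * n)),
      σ ∉ Finset.image (fun p : Equiv.Perm (Fin n) × (Fin n → Bool) => FP n p.1 p.2)
        Finset.univ →
      ((Equiv.Perm.sign σ : ℤ) : ℝ) *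
        ω (fun m => curv 𝔤 n ξ 0 (Pi.single (σ (idx1 n m)) 1) (Pi.single (σ (idx2 n m)) 1))
        = 0 := by
    intro σ hσ
    have hnot : ¬ ∀ m : Fin n, ∃ k : Fin n,
        (σ (idx1 n m) = idx1 n k ∧ σ (idx2 n m) = idx2 n k) ∨
        (σ (idx1 n m) = idx2 n k ∧ σ (idx2 n m) = idx1 n k) := by
      intro hall
      apply hσ
      choose t ht using hall
      have tinj : Function.Injective t := by
        intro m m' hmm
        have key' : ∀ {c c' : Bool}, σ (pt n c m) = idx1 n (t m) →
            σ (pt n c' m') = idx1 n (t m') → m = m' := by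
          intro c c' hc hc'
          have : σ (pt n c m) = σ (pt n c' m') := by rw [hc, hc', hmm]
          exact (pt_inj (σ.injective this)).2
        rcases ht m with ⟨h1, h2⟩ | ⟨h1, h2⟩ <;> rcases ht m' with ⟨h1', h2'⟩ | ⟨h1', h2'⟩
        · exact key' (c := false) (c' := false) h1 h1'
        · exact key' (c := false) (c' := true) h1 h2'
        · exact key' (c := true) (c' := false) h2 h1'
        · exact key' (c := true) (c' := true) h2 h2'
      let τ : Equiv.Perm (Fin n) := Equiv.ofBijective t (Finite.injective_iff_bijective.mp tinj)
      let b : Fin n → Bool := fun m => decide (σ (idx1 n m) = idx2 n (t m))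
      refine Finset.mem_image.mpr ⟨(τ, b), Finset.mem_univ _, ?_⟩
      apply Equiv.ext; intro i
      have hi := pt_par_pr n i
      rw [← hi, FP_pt]
      have hτ : τ (pr n i) = t (pr n i) := rfl
      set m := pr n i with hm
      set c := par i with hc
      rcases ht m with ⟨h1, h2⟩ | ⟨h1, h2⟩
      · have hb : b m = false := by
          have hne : ¬ σ (idx1 n m) = idx2 n (t m) := by
            rw [h1, idx1_eq_pt, idx2_eq_pt]
            intro h
            exact Bool.false_ne_true (pt_inj h).1
          simp [b, hne]
        show pt n (xor c (b m)) (τ m) = σ (pt n c m)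
        rw [hb, hτ]
        cases c
        · simpa [idx1_eq_pt] using h1.symm
        · simpa [idx2_eq_pt] using h2.symm
      · have hb : b m = true := by simp [b, h1]
        show pt n (xor c (b m)) (τ m) = σ (pt n c m)
        rw [hb, hτ]
        cases c
        · simpa [idx1_eq_pt, idx2_eq_pt] using h1.symm
        · simpa [idx1_eq_pt, idx2_eq_pt] using h2.symm
    push_neg at hnot
    obtain ⟨m, hm⟩ := hnot
    have hcurv : (fun m' => curv 𝔤 n ξ 0
        (Pi.single (σ (idx1 n m')) 1) (Pi.single (σ (idx2 n m')) 1)) m = 0 := by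
      exact curv_single_zero 𝔤 n ξ _ _ fun k => ⟨fun h => (hm k).1 h.1 h.2, fun h => (hm k).2 h.1 h.2⟩
    rw [ω.map_coord_zero m hcurv, mul_zero]
  have hterm : ∀ p : Equiv.Perm (Fin n) × (Fin n → Bool),
      ((Equiv.Perm.sign (FP n p.1 p.2) : ℤ) : ℝ) *
        ω (fun m => curv 𝔤 n ξ 0 (Pi.single (FP n p.1 p.2 (idx1 n m)) 1)
          (Pi.single (FP n p.1 p.2 (idx2 n m)) 1)) = ω ξ := by
    rintro ⟨τ, b⟩
    have hargs : (fun m => curv 𝔤 n ξ 0 (Pi.single (FP n τ b (idx1 n m)) 1)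
        (Pi.single (FP n τ b (idx2 n m)) 1)) =
        fun m => (if b m then (-1 : ℝ) else 1) • ξ (τ m) := by
      funext m
      rw [idx1_eq_pt, idx2_eq_pt, FP_pt, FP_pt]
      have h1 : xor false (b m) = b m := by simp
      have h2 : xor true (b m) = !(b m) := by simp
      rw [h1, h2]
      exact curv_single_pair 𝔤 n ξ (b m) (τ m)
    rw [hargs, ω.map_smul_univ, show (fun m => ξ (τ m)) = ξ ∘ τ from rfl, hsym τ ξ,
      sign_FP_real, smul_eq_mul, ← mul_assoc, ← Finset.prod_mul_distrib]
    have : ∀ m : Fin n, (if b m then (-1 : ℝ) else 1) * (if b m then (-1 : ℝ) else 1) = 1 := by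
      intro m; cases b m <;> norm_num
    rw [Finset.prod_congr rfl fun m _ => this m, Finset.prod_const_one, one_mul]
  rw [← Finset.sum_subset (Finset.subset_univ _) (fun σ _ h => himg σ h),
    Finset.sum_image (fun p _ q _ h => FP_injective n h)]
  simp only [hterm]
  rw [Finset.sum_const, Finset.card_univ, Fintype.card_prod, Fintype.card_perm,
    Fintype.card_fun, Fintype.card_bool, Fintype.card_fin, nsmul_eq_mul]
  push_cast
  have h2 : (2:ℝ)^n ≠ 0 := by positivity
  field_simp

/-- For `ω ∈ Sⁿ(𝔤*)` with `ω(ξ_{i₁}⋯ξ_{iₙ}) ≠ 0` and the above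
connection on the trivial bundle `ℝ^{2n} × G → ℝ^{2n}`, the Chern–Weil form
`ω(Ω^{∧n})`, evaluated at the origin on the coordinate vectors `∂₁, …, ∂_{2n}`,
equals `n!·ω(ξ_{i₁}⋯ξ_{iₙ})`, which is nonzero.  Consequently the Weil
homomorphism `W(𝔤) → Ω(EG)` is injective: a symmetric polynomial all of whose
Chern–Weil forms vanish is zero. -/
theorem chern_weil_evaluation_and_injectivity
    (n : ℕ) (hn : 0 < n) (ξ : Fin n → 𝔤)
    (ω : MultilinearMap ℝ (fun _ : Fin n => 𝔤) ℝ)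
    (hsym : ∀ (σ : Equiv.Perm (Fin n)) (c : Fin n → 𝔤), ω (c ∘ σ) = ω c)
    (hω : ω ξ ≠ 0) :
    chernWeilForm 𝔤 n ξ ω 0 (fun i => Pi.single i 1) = (n.factorial : ℝ) * ω ξ ∧
    chernWeilForm 𝔤 n ξ ω 0 (fun i => Pi.single i 1) ≠ 0 ∧
    (∀ ω' : MultilinearMap ℝ (fun _ : Fin n => 𝔤) ℝ,
      (∀ (σ : Equiv.Perm (Fin n)) (c : Fin n → 𝔤), ω' (c ∘ σ) = ω' c) →
      (∀ (c : Fin n → 𝔤) (x : Fin (2 * n) → ℝ) (v : Fin (2 * n) → Fin (2 * n) → ℝ),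
        chernWeilForm 𝔤 n c ω' x v = 0) →
      ω' = 0) := by
  refine ⟨key 𝔤 n ξ ω hsym, ?_, ?_⟩
  · rw [key 𝔤 n ξ ω hsym]
    exact mul_ne_zero (Nat.cast_ne_zero.mpr n.factorial_ne_zero) hω
  · intro ω' hsym' hvan
    ext c
    have hv := hvan c 0 (fun i => Pi.single i 1)
    rw [key 𝔤 n c ω' hsym'] at hv
    have hfac : (n.factorial : ℝ) ≠ 0 := Nat.cast_ne_zero.mpr n.factorial_ne_zero
    simpa using (mul_eq_zero.mp hv).resolve_left hfac
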